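/- Let s_1,…,s_N be distinct points in ℝ^d such that for every i, the distances ‖s_i − s_j‖ for j < i are pairwise distinct. For each m ≥ 1, let g_m(i) be the set of indices of the min(m, i−1) points among s_1,…,s_{i−1} nearest to s_i. Then g_m(i) ⊆ g_{m+1}(i) for all i and m, and consequently, for any multivariate normal vector x = (x_1,…,x_N) with positive definite covariance indexed by these points, the Vecchia approximations f̂_m with conditioning vectors g_m satisfy KL(f‖f̂_{m+1}) ≤ KL(f‖f̂_m) for all m. (Proposition 2, part 2: the KL divergence is nonincreasing in the number of nearest neighbors m.) -/

import Mathlib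

open MeasureTheory Real Finset Matrix

noncomputable section

/-- Density of the one-dimensional normal distribution `N(μ, v)` evaluated at `t`. -/
def gauss1 (μ v t : ℝ) : ℝ :=
  (Real.sqrt (2 * π * v))⁻¹ * Real.exp (-((t - μ) ^ 2) / (2 * v))

variable {ι : Type*} [Fintype ι] [DecidableEq ι]

/-- Joint density of the multivariate normal distribution `N(μ, K)` on `ι → ℝ`. -/
def gaussDensity (μ : ι → ℝ) (K : Matrix ι ι ℝ) (x : ι → ℝ) : ℝ :=
  (Real.sqrt ((2 * π) ^ (Fintype.card ι) * K.det))⁻¹ *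
    Real.exp (-(dotProduct (x - μ) (K⁻¹ *ᵥ (x - μ))) / 2)

/-- Submatrix of `K` with rows and columns in the index set `G`. -/
def subm (K : Matrix ι ι ℝ) (G : Finset ι) : Matrix G G ℝ :=
  Matrix.of fun j k => K j.1 k.1

/-- Gaussian conditional mean `E(x i | x_G)` for `x ~ N(μ, K)`, as a function of `x`. -/
def condMean (μ : ι → ℝ) (K : Matrix ι ι ℝ) (i : ι) (G : Finset ι) (x : ι → ℝ) : ℝ :=
  μ i + dotProduct (fun j : G => K i j.1)
    ((subm K G)⁻¹ *ᵥ fun j : G => x j.1 - μ j.1)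

/-- Gaussian conditional variance `Var(x i | x_G)` for `x ~ N(μ, K)`
(it does not depend on the value of `x_G`). -/
def condVar (K : Matrix ι ι ℝ) (i : ι) (G : Finset ι) : ℝ :=
  K i i - dotProduct (fun j : G => K i j.1)
    ((subm K G)⁻¹ *ᵥ fun j : G => K j.1 i)

/-- Gaussian conditional covariance `Cov(x a, x b | x_G)` for `x ~ N(0, K)`. -/
def condCov (K : Matrix ι ι ℝ) (a b : ι) (G : Finset ι) : ℝ :=
  K a b - dotProduct (fun j : G => K a j.1)
    ((subm K G)⁻¹ *ᵥ fun j : G => K j.1 b)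

/-- The exact Gaussian conditional density `f(x i | x_G)` for `x ~ N(μ, K)`. -/
def condDens (μ : ι → ℝ) (K : Matrix ι ι ℝ) (i : ι) (G : Finset ι) (x : ι → ℝ) : ℝ :=
  gauss1 (condMean μ K i G x) (condVar K i G) (x i)

/-- The general Vecchia approximation `f̂(x) = ∏ i, f(x i | x_{g i})` of `N(μ, K)`. -/
def vecchia (μ : ι → ℝ) (K : Matrix ι ι ℝ) (g : ι → Finset ι) (x : ι → ℝ) : ℝ :=
  ∏ i, condDens μ K i (g i) x

/-- Kullback–Leibler divergence `KL(f ‖ g) = ∫ f log(f/g)` between densities on `ι → ℝ`. -/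
def KLdiv (f g : (ι → ℝ) → ℝ) : ℝ :=
  ∫ x : ι → ℝ, f x * Real.log (f x / g x)




open Filter
set_option linter.unusedSectionVars false
set_option linter.unusedVariables false
set_option maxHeartbeats 1000000

lemma gauss1_pos {μ v : ℝ} (hv : 0 < v) (t : ℝ) : 0 < gauss1 μ v t :=
  mul_pos (inv_pos.2 (Real.sqrt_pos.2 (by positivity))) (Real.exp_pos _)

lemma gauss1_zero_one (t : ℝ) : gauss1 0 1 t = (Real.sqrt (2 * π))⁻¹ * Real.exp (-(2⁻¹) * t ^ 2) := by
  unfold gauss1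
  rw [sub_zero, mul_one]
  congr 1
  ring

lemma sqrt_two_pi_pos : 0 < Real.sqrt (2 * π) := Real.sqrt_pos.2 (by positivity)

lemma integrable_gauss0 : Integrable (fun t : ℝ => gauss1 0 1 t) := by
  simp_rw [gauss1_zero_one]
  exact (integrable_exp_neg_mul_sq (by norm_num : (0:ℝ) < 2⁻¹)).const_mul _

lemma integrable_gauss1' : Integrable (fun t : ℝ => t * gauss1 0 1 t) := by
  simp_rw [gauss1_zero_one]
  have := (integrable_mul_exp_neg_mul_sq (by norm_num : (0:ℝ) < 2⁻¹)).const_mul (Real.sqrt (2 * π))⁻¹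
  apply this.congr
  filter_upwards with t
  ring

lemma sq_le_exp_bound (t : ℝ) : t ^ 2 * Real.exp (-(2⁻¹) * t ^ 2) ≤ 4 * Real.exp (-(4⁻¹) * t ^ 2) := by
  have h2 : t ^ 2 ≤ 4 * Real.exp (4⁻¹ * t ^ 2) := by
    nlinarith [Real.add_one_le_exp (4⁻¹ * t ^ 2)]
  calc t ^ 2 * Real.exp (-(2⁻¹) * t ^ 2)
      ≤ (4 * Real.exp (4⁻¹ * t ^ 2)) * Real.exp (-(2⁻¹) * t ^ 2) :=
        mul_le_mul_of_nonneg_right h2 (Real.exp_pos _).le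
    _ = 4 * Real.exp (-(4⁻¹) * t ^ 2) := by
        rw [mul_assoc, ← Real.exp_add]; ring_nf

lemma integrable_sq_exp : Integrable (fun t : ℝ => t ^ 2 * Real.exp (-(2⁻¹) * t ^ 2)) := by
  have hb : Integrable (fun t : ℝ => 4 * Real.exp (-(4⁻¹) * t ^ 2)) :=
    (integrable_exp_neg_mul_sq (by norm_num : (0:ℝ) < 4⁻¹)).const_mul 4
  apply hb.mono'
  · apply Continuous.aestronglyMeasurable; continuity
  · filter_upwards with t
    rw [Real.norm_eq_abs, abs_of_nonneg (by positivity)]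
    exact sq_le_exp_bound t

lemma integrable_gauss2 : Integrable (fun t : ℝ => t ^ 2 * gauss1 0 1 t) := by
  simp_rw [gauss1_zero_one]
  have := integrable_sq_exp.const_mul (Real.sqrt (2 * π))⁻¹
  apply this.congr
  filter_upwards with t
  ring

lemma integral_gauss0 : (∫ t : ℝ, gauss1 0 1 t) = 1 := by
  simp_rw [gauss1_zero_one]
  rw [integral_const_mul, integral_gaussian]
  rw [show (π / 2⁻¹) = 2 * π by ring]
  exact inv_mul_cancel₀ sqrt_two_pi_pos.ne'

lemma integral_gauss1' : (∫ t : ℝ, t * gauss1 0 1 t) = 0 := by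
  have h := MeasureTheory.integral_neg_eq_self (fun t : ℝ => t * gauss1 0 1 t) volume
  have heq : ∀ t : ℝ, (-t) * gauss1 0 1 (-t) = -(t * gauss1 0 1 t) := by
    intro t
    have : gauss1 0 1 (-t) = gauss1 0 1 t := by unfold gauss1; ring_nf
    rw [this]; ring
  simp_rw [heq] at h
  rw [integral_neg] at h
  linarith

lemma tendsto_mul_exp_atTop : Tendsto (fun t : ℝ => t * Real.exp (-(2⁻¹) * t ^ 2)) atTop (nhds 0) := by
  refine squeeze_zero_norm' (a := fun t : ℝ => Real.exp (-t)) ?_ ?_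
  · filter_upwards [Filter.eventually_ge_atTop (4:ℝ)] with t ht
    have ht0 : (0:ℝ) ≤ t := by linarith
    rw [Real.norm_eq_abs, abs_of_nonneg (by positivity)]
    have h1 : t ≤ Real.exp (4⁻¹ * t ^ 2) := by
      have : t ≤ 4⁻¹ * t ^ 2 := by nlinarith
      calc t ≤ 4⁻¹ * t ^ 2 := this
        _ ≤ Real.exp (4⁻¹ * t ^ 2) := by linarith [Real.add_one_le_exp (4⁻¹ * t^2)]
    have h2 : 4⁻¹ * t ^ 2 + -(2⁻¹) * t ^2 = -(4⁻¹) * t ^ 2 := by ring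
    have h3 : -(4⁻¹) * t ^ 2 ≤ -t := by nlinarith
    calc t * Real.exp (-(2⁻¹) * t ^ 2) ≤ Real.exp (4⁻¹ * t ^ 2) * Real.exp (-(2⁻¹) * t ^ 2) :=
          mul_le_mul_of_nonneg_right h1 (Real.exp_pos _).le
      _ = Real.exp (-(4⁻¹) * t ^ 2) := by rw [← Real.exp_add, h2]
      _ ≤ Real.exp (-t) := Real.exp_le_exp.2 h3
  · exact Real.tendsto_exp_atBot.comp tendsto_neg_atTop_atBot

lemma tendsto_F_atTop : Tendsto (fun t : ℝ => -t * Real.exp (-(2⁻¹) * t ^ 2)) atTop (nhds 0) := by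
  have := tendsto_mul_exp_atTop.neg
  rw [neg_zero] at this
  apply this.congr
  intro t; ring

lemma tendsto_F_atBot : Tendsto (fun t : ℝ => -t * Real.exp (-(2⁻¹) * t ^ 2)) atBot (nhds 0) := by
  have : (fun t : ℝ => -t * Real.exp (-(2⁻¹) * t ^ 2)) =
      (fun u : ℝ => u * Real.exp (-(2⁻¹) * u ^ 2)) ∘ (fun t => -t) := by
    funext t; simp [Function.comp]
  rw [this]
  exact tendsto_mul_exp_atTop.comp tendsto_neg_atBot_atTop

lemma hasDerivF (t : ℝ) : HasDerivAt (fun t : ℝ => -t * Real.exp (-(2⁻¹) * t ^ 2))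
    ((t ^ 2 - 1) * Real.exp (-(2⁻¹) * t ^ 2)) t := by
  have h1 : HasDerivAt (fun t : ℝ => -t) (-1) t := (hasDerivAt_id t).neg
  have h2 : HasDerivAt (fun t : ℝ => Real.exp (-(2⁻¹) * t ^ 2)) (Real.exp (-(2⁻¹) * t^2) * (-(2⁻¹) * (2 * t))) t := by
    have hq : HasDerivAt (fun t : ℝ => -(2⁻¹) * t ^ 2) (-(2⁻¹) * (2 * t)) t := by
      simpa using ((hasDerivAt_pow 2 t).const_mul (-(2⁻¹ : ℝ)))
    exact (Real.hasDerivAt_exp _).comp t hq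
  have : HasDerivAt (fun t : ℝ => -t * Real.exp (-(2⁻¹) * t ^ 2))
      (-1 * Real.exp (-(2⁻¹) * t ^ 2) + -t * (Real.exp (-(2⁻¹) * t ^ 2) * (-(2⁻¹) * (2 * t)))) t :=
    h1.fun_mul h2
  convert this using 1
  ring

lemma integrable_F' : Integrable (fun t : ℝ => (t ^ 2 - 1) * Real.exp (-(2⁻¹) * t ^ 2)) := by
  have h0 : Integrable (fun t : ℝ => Real.exp (-(2⁻¹) * t ^ 2)) :=
    integrable_exp_neg_mul_sq (by norm_num)
  have := integrable_sq_exp.sub h0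
  apply this.congr
  filter_upwards with t
  simp only [Pi.sub_apply]
  ring

lemma integral_F'_eq_zero : (∫ t : ℝ, (t ^ 2 - 1) * Real.exp (-(2⁻¹) * t ^ 2)) = 0 := by
  set F := fun t : ℝ => -t * Real.exp (-(2⁻¹) * t ^ 2) with hF
  have hIoi : (∫ t in Set.Ioi (0:ℝ), (t ^ 2 - 1) * Real.exp (-(2⁻¹) * t ^ 2)) = 0 - F 0 :=
    integral_Ioi_of_hasDerivAt_of_tendsto' (fun x _ => hasDerivF x)
      integrable_F'.integrableOn tendsto_F_atTop
  have hIic : (∫ t in Set.Iic (0:ℝ), (t ^ 2 - 1) * Real.exp (-(2⁻¹) * t ^ 2)) = F 0 - 0 :=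
    integral_Iic_of_hasDerivAt_of_tendsto' (fun x _ => hasDerivF x)
      integrable_F'.integrableOn tendsto_F_atBot
  have := intervalIntegral.integral_Iic_add_Ioi (μ := volume) (b := (0:ℝ))
    integrable_F'.integrableOn integrable_F'.integrableOn
  rw [hIoi, hIic] at this
  rw [← this]; ring

lemma integral_gauss2 : (∫ t : ℝ, t ^ 2 * gauss1 0 1 t) = 1 := by
  have h0 : Integrable (fun t : ℝ => Real.exp (-(2⁻¹) * t ^ 2)) :=
    integrable_exp_neg_mul_sq (by norm_num)
  have key : (∫ t : ℝ, t ^ 2 * Real.exp (-(2⁻¹) * t ^ 2)) = Real.sqrt (2 * π) := by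
    have hsub := MeasureTheory.integral_sub integrable_sq_exp h0
    have heq : (∫ t : ℝ, (t ^ 2 - 1) * Real.exp (-(2⁻¹) * t ^ 2))
        = (∫ t : ℝ, t ^ 2 * Real.exp (-(2⁻¹) * t ^ 2)) - ∫ t : ℝ, Real.exp (-(2⁻¹) * t ^ 2) := by
      rw [← hsub]
      congr 1
      funext t
      ring
    rw [integral_F'_eq_zero] at heq
    have hg : (∫ t : ℝ, Real.exp (-(2⁻¹) * t ^ 2)) = Real.sqrt (2 * π) := by
      rw [integral_gaussian, show (π / 2⁻¹) = 2 * π by ring]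
    linarith [heq, hg.symm ▸ heq]
  simp_rw [gauss1_zero_one]
  rw [show (fun t : ℝ => t ^ 2 * ((Real.sqrt (2*π))⁻¹ * Real.exp (-(2⁻¹) * t ^ 2)))
      = (fun t : ℝ => (Real.sqrt (2*π))⁻¹ * (t ^ 2 * Real.exp (-(2⁻¹) * t ^ 2))) from by
    funext t; ring]
  rw [integral_const_mul, key]
  exact inv_mul_cancel₀ sqrt_two_pi_pos.ne'

/-- moments of the standard 1D gaussian, exponents ≤ 2 -/
lemma integrable_pow_gauss {n : ℕ} (hn : n ≤ 2) :
    Integrable (fun t : ℝ => t ^ n * gauss1 0 1 t) := by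
  interval_cases n
  · simpa using integrable_gauss0
  · simpa using integrable_gauss1'
  · exact integrable_gauss2

lemma integral_pow_gauss {n : ℕ} (hn : n ≤ 2) :
    (∫ t : ℝ, t ^ n * gauss1 0 1 t) = if n = 1 then 0 else 1 := by
  interval_cases n
  · simpa using integral_gauss0
  · simpa using integral_gauss1'
  · simpa using integral_gauss2


lemma integrable_prod_pow_gauss (e : ι → ℕ) (he : ∀ i, e i ≤ 2) :
    Integrable (fun y : ι → ℝ => ∏ i, (y i ^ e i * gauss1 0 1 (y i))) :=
  Integrable.fintype_prod (f := fun i (t : ℝ) => t ^ e i * gauss1 0 1 t)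
    (fun i => integrable_pow_gauss (he i))

lemma integral_prod_pow_gauss (e : ι → ℕ) (he : ∀ i, e i ≤ 2) :
    (∫ y : ι → ℝ, ∏ i, (y i ^ e i * gauss1 0 1 (y i)))
      = ∏ i, (if e i = 1 then (0:ℝ) else 1) := by
  rw [volume_pi, MeasureTheory.integral_fintype_prod_eq_prod (f := fun i (t : ℝ) => t ^ e i * gauss1 0 1 t)]
  exact Finset.prod_congr rfl fun i _ => integral_pow_gauss (he i)

/-- the moments we need: `y j * y k` against the standard gaussian product -/
def eJK (j k : ι) : ι → ℕ := fun i => (if i = j then 1 else 0) + (if i = k then 1 else 0)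

lemma eJK_le (j k : ι) (i : ι) : eJK j k i ≤ 2 := by
  unfold eJK
  split <;> split <;> norm_num

lemma prod_pow_eJK (j k : ι) (y : ι → ℝ) :
    (∏ i, y i ^ eJK j k i) = y j * y k := by
  unfold eJK
  simp_rw [pow_add]
  rw [Finset.prod_mul_distrib]
  congr 1
  · rw [show (∏ i, y i ^ (if i = j then 1 else 0)) = ∏ i, (if i = j then y i else 1) from
      Finset.prod_congr rfl fun i _ => by split <;> simp]
    simp
  · rw [show (∏ i, y i ^ (if i = k then 1 else 0)) = ∏ i, (if i = k then y i else 1) from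
      Finset.prod_congr rfl fun i _ => by split <;> simp]
    simp

lemma integrable_jk_gauss (j k : ι) :
    Integrable (fun y : ι → ℝ => (y j * y k) * ∏ i, gauss1 0 1 (y i)) := by
  have := integrable_prod_pow_gauss (eJK j k) (eJK_le j k)
  apply this.congr
  filter_upwards with y
  rw [Finset.prod_mul_distrib, prod_pow_eJK]

lemma integral_jk_gauss (j k : ι) :
    (∫ y : ι → ℝ, (y j * y k) * ∏ i, gauss1 0 1 (y i)) = if j = k then 1 else 0 := by
  have heq : (fun y : ι → ℝ => (y j * y k) * ∏ i, gauss1 0 1 (y i))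
      = fun y : ι → ℝ => ∏ i, (y i ^ eJK j k i * gauss1 0 1 (y i)) := by
    funext y
    rw [Finset.prod_mul_distrib, prod_pow_eJK]
  rw [heq, integral_prod_pow_gauss _ (eJK_le j k)]
  by_cases hjk : j = k
  · subst hjk
    rw [if_pos rfl]
    apply Finset.prod_eq_one
    intro i _
    unfold eJK
    split <;> norm_num
  · rw [if_neg hjk]
    apply Finset.prod_eq_zero (Finset.mem_univ j)
    unfold eJK
    rw [if_pos rfl, if_neg hjk]
    norm_num

lemma integrable_prod_gauss :
    Integrable (fun y : ι → ℝ => ∏ i, gauss1 0 1 (y i)) := by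
  have := integrable_prod_pow_gauss (ι := ι) (fun _ => 0) (fun _ => by norm_num)
  simpa using this

lemma integral_prod_gauss :
    (∫ y : ι → ℝ, ∏ i, gauss1 0 1 (y i)) = 1 := by
  have := integral_prod_pow_gauss (ι := ι) (fun _ => 0) (fun _ => by norm_num)
  simpa using this

section transfer
variable (A : Matrix ι ι ℝ)

/-- `mulVec` by an invertible matrix as a measurable equivalence. -/
def mvE (hdet : A.det ≠ 0) : (ι → ℝ) ≃ᵐ (ι → ℝ) where
  toFun := fun y => A *ᵥ y
  invFun := fun y => A⁻¹ *ᵥ y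
  left_inv := fun y => by
    show A⁻¹ *ᵥ (A *ᵥ y) = y
    rw [Matrix.mulVec_mulVec, Matrix.nonsing_inv_mul _ (isUnit_iff_ne_zero.2 hdet),
      Matrix.one_mulVec]
  right_inv := fun y => by
    show A *ᵥ (A⁻¹ *ᵥ y) = y
    rw [Matrix.mulVec_mulVec, Matrix.mul_nonsing_inv _ (isUnit_iff_ne_zero.2 hdet),
      Matrix.one_mulVec]
  measurable_toFun := by
    show Measurable fun y => A *ᵥ y
    have : Continuous fun y : ι → ℝ => A *ᵥ y := by
      rw [show (fun y : ι → ℝ => A *ᵥ y) = ⇑(Matrix.mulVecLin A) from rfl]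
      exact (Matrix.mulVecLin A).continuous_of_finiteDimensional
    exact this.measurable
  measurable_invFun := by
    show Measurable fun y => A⁻¹ *ᵥ y
    have : Continuous fun y : ι → ℝ => A⁻¹ *ᵥ y := by
      rw [show (fun y : ι → ℝ => A⁻¹ *ᵥ y) = ⇑(Matrix.mulVecLin A⁻¹) from rfl]
      exact (Matrix.mulVecLin A⁻¹).continuous_of_finiteDimensional
    exact this.measurable

lemma mvE_map (hdet : A.det ≠ 0) : (volume : Measure (ι → ℝ)).map (mvE A hdet)
    = ENNReal.ofReal |A.det|⁻¹ • volume := by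
  have h := Real.map_matrix_volume_pi_eq_smul_volume_pi hdet
  rw [show ⇑(mvE A hdet) = ⇑(Matrix.toLin' A) from ?_]
  · rw [h, abs_inv]
  · funext y
    simp [mvE, Matrix.toLin'_apply]

lemma transfer_integral (hdet : A.det ≠ 0) (f : (ι → ℝ) → ℝ) :
    (∫ x, f x) = |A.det| * ∫ y, f (A *ᵥ y) := by
  have h1 : (∫ y, f (A *ᵥ y)) = ∫ x, f x ∂((volume : Measure (ι → ℝ)).map (mvE A hdet)) := by
    rw [MeasureTheory.integral_map_equiv]
    rfl
  rw [h1, mvE_map, integral_smul_measure]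
  have habs : (0:ℝ) < |A.det| := abs_pos.2 hdet
  rw [ENNReal.toReal_ofReal (by positivity)]
  rw [smul_eq_mul, ← mul_assoc, mul_inv_cancel₀ habs.ne', one_mul]

lemma transfer_integrable (hdet : A.det ≠ 0) (f : (ι → ℝ) → ℝ) :
    Integrable (fun y => f (A *ᵥ y)) volume ↔ Integrable f volume := by
  have h1 : Integrable (fun y => f (A *ᵥ y)) volume ↔ Integrable f ((volume : Measure (ι → ℝ)).map (mvE A hdet)) := by
    rw [MeasureTheory.integrable_map_equiv]
    rfl
  rw [h1, mvE_map]
  have habs : (0:ℝ) < |A.det| := abs_pos.2 hdet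
  have hne : ENNReal.ofReal |A.det|⁻¹ ≠ 0 := by
    simp only [ne_eq, ENNReal.ofReal_eq_zero, not_le]
    positivity
  exact integrable_smul_measure hne ENNReal.ofReal_ne_top

end transfer

def extG (G : Finset ι) (w : G → ℝ) : ι → ℝ := fun a => if h : a ∈ G then w ⟨a, h⟩ else 0

lemma extG_coe {G : Finset ι} (w : G → ℝ) (j : G) : extG G w j.1 = w j := by
  simp [extG, j.2]

lemma extG_not_mem {G : Finset ι} (w : G → ℝ) {a : ι} (ha : a ∉ G) : extG G w a = 0 := by
  simp [extG, ha]

lemma sum_mul_extG {G : Finset ι} (w : G → ℝ) (F : ι → ℝ) :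
    (∑ a, F a * extG G w a) = ∑ j : G, F j.1 * w j := by
  rw [← Finset.sum_subset (Finset.subset_univ G)
    (by intro a _ ha; simp [extG, ha])]
  rw [show (∑ j : G, F j.1 * w j) = ∑ j : G, F j.1 * extG G w j.1 by
    refine Finset.sum_congr rfl fun j _ => by rw [extG_coe]]
  exact (Finset.sum_coe_sort G (fun a => F a * extG G w a)).symm

lemma symm_apply {K : Matrix ι ι ℝ} (hK : K.PosDef) (a b : ι) : K a b = K b a := by
  have h := congrFun (congrFun hK.1 a) b
  simpa [Matrix.conjTranspose_apply] using h.symm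

lemma posdef_quad {K : Matrix ι ι ℝ} (hK : K.PosDef) {x : ι → ℝ} (hx : x ≠ 0) :
    0 < dotProduct x (K *ᵥ x) := by
  have := hK.dotProduct_mulVec_pos hx; simpa using this

lemma possemidef_quad {K : Matrix ι ι ℝ} (hK : K.PosSemidef) (x : ι → ℝ) :
    0 ≤ dotProduct x (K *ᵥ x) := by
  have := hK.dotProduct_mulVec_nonneg x; simpa using this

lemma dot_expand (K : Matrix ι ι ℝ) (u w : ι → ℝ) :
    dotProduct u (K *ᵥ w) = ∑ a, ∑ b, u a * K a b * w b := by
  simp [dotProduct, Matrix.mulVec, Finset.mul_sum, mul_assoc]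

lemma quad_ext (K : Matrix ι ι ℝ) (G : Finset ι) (w : G → ℝ) :
    (∑ a, ∑ b, extG G w a * K a b * extG G w b) = dotProduct w ((subm K G) *ᵥ w) := by
  have h1 : ∀ a, (∑ b, extG G w a * K a b * extG G w b)
      = (fun c => ∑ b, K c b * extG G w b) a * extG G w a := by
    intro a; rw [Finset.sum_mul]
    refine Finset.sum_congr rfl fun b _ => by ring
  simp_rw [h1]
  rw [sum_mul_extG w (fun c => ∑ b, K c b * extG G w b)]
  rw [show dotProduct w ((subm K G) *ᵥ w) = ∑ j : G, (∑ k : G, K j.1 k.1 * w k) * w j from by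
    simp [dotProduct, Matrix.mulVec, subm, mul_comm]]
  refine Finset.sum_congr rfl fun j _ => by rw [sum_mul_extG w (fun b => K j.1 b)]

lemma sum_delta (F : ι → ℝ) (i : ι) : (∑ a, (if a = i then (1:ℝ) else 0) * F a) = F i := by
  rw [Finset.sum_eq_single i]
  · simp
  · intro b _ hb; simp [hb]
  · intro h; exact absurd (Finset.mem_univ i) h

def uvec (K : Matrix ι ι ℝ) (G : Finset ι) (i : ι) (w : G → ℝ) : ι → ℝ :=
  fun a => (if a = i then 1 else 0) - extG G w a

lemma quad_expand {K : Matrix ι ι ℝ} (hK : K.PosDef) {G : Finset ι} {i : ι} (hi : i ∉ G)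
    (w : G → ℝ) :
    dotProduct (uvec K G i w) (K *ᵥ uvec K G i w)
      = K i i - 2 * (∑ j : G, K i j.1 * w j) + dotProduct w ((subm K G) *ᵥ w) := by
  rw [dot_expand]
  have expand : ∀ a b, uvec K G i w a * K a b * uvec K G i w b
      = (if a = i then (1:ℝ) else 0) * K a b * (if b = i then (1:ℝ) else 0)
        - (if a = i then (1:ℝ) else 0) * (K a b * extG G w b)
        - extG G w a * ((if b = i then (1:ℝ) else 0) * K a b)
        + extG G w a * K a b * extG G w b := by
    intro a b; unfold uvec; ring
  simp_rw [expand, Finset.sum_add_distrib, Finset.sum_sub_distrib]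
  have S1 : (∑ a, ∑ b, (if a = i then (1:ℝ) else 0) * K a b * (if b = i then (1:ℝ) else 0)) = K i i := by
    have : ∀ a, (∑ b, (if a = i then (1:ℝ) else 0) * K a b * (if b = i then (1:ℝ) else 0))
        = (if a = i then (1:ℝ) else 0) * ((∑ b, (if b = i then (1:ℝ) else 0) * K a b)) := by
      intro a; rw [Finset.mul_sum]; exact Finset.sum_congr rfl fun b _ => by ring
    simp_rw [this, sum_delta]
  have S2 : (∑ a, ∑ b, (if a = i then (1:ℝ) else 0) * (K a b * extG G w b))
      = ∑ j : G, K i j.1 * w j := by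
    rw [show (∑ a, ∑ b, (if a = i then (1:ℝ) else 0) * (K a b * extG G w b))
        = ∑ a, (if a = i then (1:ℝ) else 0) * (fun c => ∑ b, K c b * extG G w b) a from by
      refine Finset.sum_congr rfl fun a _ => by rw [Finset.mul_sum]]
    rw [sum_delta (fun c => ∑ b, K c b * extG G w b) i]
    exact sum_mul_extG w (fun b => K i b)
  have S3 : (∑ a, ∑ b, extG G w a * ((if b = i then (1:ℝ) else 0) * K a b))
      = ∑ j : G, K i j.1 * w j := by
    have hin : ∀ a, (∑ b, extG G w a * ((if b = i then (1:ℝ) else 0) * K a b))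
        = extG G w a * ∑ b, (if b = i then (1:ℝ) else 0) * K a b := by
      intro a; rw [Finset.mul_sum]
    simp_rw [hin, sum_delta]
    rw [show (∑ a, extG G w a * K a i) = ∑ a, (fun c => K c i) a * extG G w a from
      Finset.sum_congr rfl fun a _ => by ring]
    rw [sum_mul_extG w (fun c => K c i)]
    exact Finset.sum_congr rfl fun j _ => by rw [symm_apply hK]
  rw [S1, S2, S3, quad_ext]
  ring

def cvec (K : Matrix ι ι ℝ) (G : Finset ι) (i : ι) : G → ℝ :=
  (subm K G)⁻¹ *ᵥ fun j => K j.1 i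

lemma subm_posDef {K : Matrix ι ι ℝ} (hK : K.PosDef) (G : Finset ι) : (subm K G).PosDef := by
  refine Matrix.PosDef.of_dotProduct_mulVec_pos ?_ ?_
  · ext j k
    simp only [Matrix.conjTranspose_apply, subm, Matrix.of_apply, star_trivial]
    exact symm_apply hK k.1 j.1
  · intro x hx
    have hxe : extG G x ≠ 0 := by
      intro h; apply hx; funext j
      have := congrFun h j.1
      rwa [extG_coe, Pi.zero_apply] at this
    have hpos := posdef_quad hK hxe
    rw [dot_expand, quad_ext] at hpos
    simpa using hpos

lemma subm_isUnit_det {K : Matrix ι ι ℝ} (hK : K.PosDef) (G : Finset ι) :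
    IsUnit (subm K G).det :=
  isUnit_iff_ne_zero.2 (subm_posDef hK G).det_pos.ne'

lemma subm_mulVec_cvec {K : Matrix ι ι ℝ} (hK : K.PosDef) (G : Finset ι) (i : ι) :
    (subm K G) *ᵥ cvec K G i = fun j => K j.1 i := by
  unfold cvec
  rw [Matrix.mulVec_mulVec, Matrix.mul_nonsing_inv _ (subm_isUnit_det hK G), Matrix.one_mulVec]

lemma dot_cvec_symm {K : Matrix ι ι ℝ} (hK : K.PosDef) (G : Finset ι) (i : ι) (w : G → ℝ) :
    dotProduct w ((subm K G) *ᵥ cvec K G i) = ∑ j : G, K i j.1 * w j := by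
  rw [subm_mulVec_cvec hK]
  unfold dotProduct
  exact Finset.sum_congr rfl fun j _ => by rw [symm_apply hK i j.1]; ring

lemma dot_symmM {M : Matrix ι ι ℝ} (hM : ∀ a b, M a b = M b a) (u w : ι → ℝ) :
    dotProduct u (M *ᵥ w) = dotProduct w (M *ᵥ u) := by
  rw [dot_expand, dot_expand, Finset.sum_comm]
  exact Finset.sum_congr rfl fun b _ => Finset.sum_congr rfl fun a _ => by rw [hM a b]; ring

lemma condVar_eq_quad {K : Matrix ι ι ℝ} (hK : K.PosDef) {G : Finset ι} {i : ι} (hi : i ∉ G) :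
    dotProduct (uvec K G i (cvec K G i)) (K *ᵥ uvec K G i (cvec K G i)) = condVar K i G := by
  rw [quad_expand hK hi]
  have h1 : dotProduct (cvec K G i) ((subm K G) *ᵥ cvec K G i)
      = ∑ j : G, K i j.1 * cvec K G i j := dot_cvec_symm hK G i _
  rw [h1]
  unfold condVar
  have h2 : dotProduct (fun j : G => K i j.1) ((subm K G)⁻¹ *ᵥ fun j : G => K j.1 i)
      = ∑ j : G, K i j.1 * cvec K G i j := rfl
  rw [h2]
  ring

lemma condVar_le_quad {K : Matrix ι ι ℝ} (hK : K.PosDef) {G : Finset ι} {i : ι} (hi : i ∉ G)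
    (w : G → ℝ) :
    condVar K i G ≤ dotProduct (uvec K G i w) (K *ᵥ uvec K G i w) := by
  set M := subm K G with hM
  set c := cvec K G i with hc
  have hMsymm : ∀ a b, M a b = M b a := fun a b => symm_apply hK a.1 b.1
  have key : dotProduct (uvec K G i w) (K *ᵥ uvec K G i w) - condVar K i G
      = dotProduct (w - c) (M *ᵥ (w - c)) := by
    rw [quad_expand hK hi, ← condVar_eq_quad hK hi, quad_expand hK hi]
    have e1 : M *ᵥ (w - c) = M *ᵥ w - M *ᵥ c := Matrix.mulVec_sub M w c
    rw [e1, sub_dotProduct, dotProduct_sub, dotProduct_sub]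
    have e2 : dotProduct w (M *ᵥ c) = ∑ j : G, K i j.1 * w j := dot_cvec_symm hK G i w
    have e3 : dotProduct c (M *ᵥ c) = ∑ j : G, K i j.1 * c j := dot_cvec_symm hK G i c
    have e4 : dotProduct c (M *ᵥ w) = dotProduct w (M *ᵥ c) := dot_symmM hMsymm c w
    rw [e2, e3, e4, e2]
    ring
  have hpos := possemidef_quad (subm_posDef hK G).posSemidef (w - c)
  linarith [key ▸ hpos, le_of_eq key.symm]

lemma condVar_pos {K : Matrix ι ι ℝ} (hK : K.PosDef) {G : Finset ι} {i : ι} (hi : i ∉ G) :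
    0 < condVar K i G := by
  rw [← condVar_eq_quad hK hi]
  apply posdef_quad hK
  intro h
  have := congrFun h i
  rw [Pi.zero_apply] at this
  unfold uvec at this
  rw [if_pos rfl, extG_not_mem _ hi] at this
  norm_num at this

lemma condVar_anti {K : Matrix ι ι ℝ} (hK : K.PosDef) {G G' : Finset ι} {i : ι}
    (hGG' : G ⊆ G') (hi' : i ∉ G') : condVar K i G' ≤ condVar K i G := by
  have hi : i ∉ G := fun h => hi' (hGG' h)
  set w' : G' → ℝ := fun j => extG G (cvec K G i) j.1 with hw'
  have hext : extG G' w' = extG G (cvec K G i) := by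
    funext a
    by_cases ha : a ∈ G'
    · rw [show extG G' w' a = w' ⟨a, ha⟩ from dif_pos ha]
    · rw [extG_not_mem _ ha, extG_not_mem _ (fun h => ha (hGG' h))]
  have huu : uvec K G' i w' = uvec K G i (cvec K G i) := by
    funext a; unfold uvec; rw [hext]
  calc condVar K i G' ≤ dotProduct (uvec K G' i w') (K *ᵥ uvec K G' i w') :=
        condVar_le_quad hK hi' w'
    _ = condVar K i G := by rw [huu]; exact condVar_eq_quad hK hi

open scoped MatrixOrder in
lemma exists_sqrtM {K : Matrix ι ι ℝ} (hK : K.PosDef) :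
    ∃ A : Matrix ι ι ℝ, A * A = K ∧ (∀ a b, A a b = A b a) ∧ A.det ≠ 0 := by
  have h0 : (0 : Matrix ι ι ℝ) ≤ K := Matrix.nonneg_iff_posSemidef.2 hK.posSemidef
  refine ⟨CFC.sqrt K, CFC.sqrt_mul_sqrt_self K h0, ?_, ?_⟩
  · intro a b
    have h := (Matrix.nonneg_iff_posSemidef.1 (CFC.sqrt_nonneg K)).1
    have := congrFun (congrFun h a) b
    simpa [Matrix.conjTranspose_apply] using this.symm
  · intro h
    have hd : K.det = (CFC.sqrt K).det * (CFC.sqrt K).det := by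
      rw [← Matrix.det_mul, CFC.sqrt_mul_sqrt_self K h0]
    rw [h, mul_zero] at hd
    exact hK.det_pos.ne' hd

section withA
variable {K : Matrix ι ι ℝ}

lemma quad_comp (A : Matrix ι ι ℝ) (hAA : A * A = K) (hs : ∀ a b, A a b = A b a)
    (hdet : A.det ≠ 0) (y : ι → ℝ) :
    dotProduct (A *ᵥ y) (K⁻¹ *ᵥ (A *ᵥ y)) = dotProduct y y := by
  have hTr : Aᵀ = A := by
    ext a b; exact hs b a
  have hKinv : K⁻¹ = A⁻¹ * A⁻¹ := by rw [← hAA, Matrix.mul_inv_rev]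
  have h1 : K⁻¹ *ᵥ (A *ᵥ y) = A⁻¹ *ᵥ y := by
    rw [hKinv, Matrix.mulVec_mulVec, mul_assoc,
      Matrix.nonsing_inv_mul _ (isUnit_iff_ne_zero.2 hdet), mul_one]
  rw [h1]
  have h2 : A *ᵥ y = Matrix.vecMul y A := by
    conv_lhs => rw [← hTr]
    rw [Matrix.mulVec_transpose]
  rw [h2, ← dotProduct_mulVec, Matrix.mulVec_mulVec,
    Matrix.mul_nonsing_inv _ (isUnit_iff_ne_zero.2 hdet), Matrix.one_mulVec]

lemma sqrt_const_eq (A : Matrix ι ι ℝ) (hAA : A * A = K) :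
    Real.sqrt ((2 * π) ^ (Fintype.card ι) * K.det)
    = (Real.sqrt (2 * π)) ^ (Fintype.card ι) * |A.det| := by
  have hd : K.det = A.det * A.det := by rw [← Matrix.det_mul, hAA]
  have h2π : (0:ℝ) ≤ 2 * π := by positivity
  have hpow : Real.sqrt ((2 * π) ^ (Fintype.card ι)) = (Real.sqrt (2 * π)) ^ (Fintype.card ι) := by
    have h1 : ((Real.sqrt (2 * π)) ^ (Fintype.card ι)) ^ 2 = (2 * π) ^ (Fintype.card ι) := by
      rw [← pow_mul, mul_comm (Fintype.card ι) 2, pow_mul, Real.sq_sqrt h2π]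
    rw [← h1, Real.sqrt_sq (by positivity)]
  rw [hd, Real.sqrt_mul (by positivity : (0:ℝ) ≤ (2 * π) ^ (Fintype.card ι)),
    Real.sqrt_mul_self_eq_abs, hpow]

lemma gaussDensity_comp (A : Matrix ι ι ℝ) (hAA : A * A = K) (hs : ∀ a b, A a b = A b a)
    (hdet : A.det ≠ 0) (y : ι → ℝ) :
    gaussDensity 0 K (A *ᵥ y) = |A.det|⁻¹ * ∏ i, gauss1 0 1 (y i) := by
  unfold gaussDensity
  rw [sub_zero, quad_comp A hAA hs hdet y, sqrt_const_eq A hAA]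
  have hdd : dotProduct y y = ∑ i, y i ^ 2 := by
    unfold dotProduct
    exact Finset.sum_congr rfl fun i _ => (sq (y i)).symm
  rw [hdd]
  have hexp : Real.exp (-(∑ i, y i ^ 2) / 2) = ∏ i, Real.exp (-(y i ^ 2) / 2) := by
    rw [← Real.exp_sum]
    congr 1
    rw [← Finset.sum_div, ← Finset.sum_neg_distrib]
  rw [hexp]
  have hg : ∀ i, gauss1 0 1 (y i) = (Real.sqrt (2 * π))⁻¹ * Real.exp (-(y i ^ 2) / 2) := by
    intro i
    unfold gauss1
    rw [mul_one, sub_zero]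
    norm_num
  simp_rw [hg]
  rw [Finset.prod_mul_distrib, Finset.prod_const, Finset.card_univ, mul_inv, ← inv_pow]
  ring

lemma integrable_gaussDensity (A : Matrix ι ι ℝ) (hAA : A * A = K) (hs : ∀ a b, A a b = A b a)
    (hdet : A.det ≠ 0) : Integrable (gaussDensity 0 K) := by
  rw [← transfer_integrable A hdet]
  have : Integrable (fun y : ι → ℝ => |A.det|⁻¹ * ∏ i, gauss1 0 1 (y i)) :=
    integrable_prod_gauss.const_mul _
  apply this.congr
  filter_upwards with y
  rw [gaussDensity_comp A hAA hs hdet]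

lemma integral_gaussDensity (A : Matrix ι ι ℝ) (hAA : A * A = K) (hs : ∀ a b, A a b = A b a)
    (hdet : A.det ≠ 0) : (∫ x, gaussDensity 0 K x) = 1 := by
  rw [transfer_integral A hdet]
  have : (∫ y : ι → ℝ, gaussDensity 0 K (A *ᵥ y))
      = |A.det|⁻¹ * ∫ y : ι → ℝ, ∏ i, gauss1 0 1 (y i) := by
    rw [← integral_const_mul]
    exact integral_congr_ae (by filter_upwards with y; rw [gaussDensity_comp A hAA hs hdet])
  rw [this, integral_prod_gauss, mul_one, mul_inv_cancel₀ (abs_ne_zero.2 hdet)]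

lemma comp_moment_eq (A : Matrix ι ι ℝ) (hAA : A * A = K) (hs : ∀ a b, A a b = A b a)
    (hdet : A.det ≠ 0) (a b : ι) (y : ι → ℝ) :
    gaussDensity 0 K (A *ᵥ y) * ((A *ᵥ y) a * (A *ᵥ y) b)
      = ∑ j, ∑ k, (|A.det|⁻¹ * (A a j * A b k)) * ((y j * y k) * ∏ i, gauss1 0 1 (y i)) := by
  rw [gaussDensity_comp A hAA hs hdet]
  have hma : (A *ᵥ y) a = ∑ j, A a j * y j := rfl
  have hmb : (A *ᵥ y) b = ∑ k, A b k * y k := rfl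
  rw [hma, hmb, Finset.sum_mul_sum, Finset.mul_sum]
  refine Finset.sum_congr rfl fun j _ => ?_
  rw [Finset.mul_sum]
  refine Finset.sum_congr rfl fun k _ => ?_
  ring

lemma integrable_moment_ab (A : Matrix ι ι ℝ) (hAA : A * A = K) (hs : ∀ a b, A a b = A b a)
    (hdet : A.det ≠ 0) (a b : ι) :
    Integrable (fun x : ι → ℝ => gaussDensity 0 K x * (x a * x b)) := by
  rw [← transfer_integrable A hdet]
  have hI : Integrable (fun y : ι → ℝ =>
      ∑ j, ∑ k, (|A.det|⁻¹ * (A a j * A b k)) * ((y j * y k) * ∏ i, gauss1 0 1 (y i))) := by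
    apply integrable_finset_sum
    intro j _
    apply integrable_finset_sum
    intro k _
    exact (integrable_jk_gauss j k).const_mul _
  apply hI.congr
  filter_upwards with y
  exact (comp_moment_eq A hAA hs hdet a b y).symm

lemma integral_moment_ab (A : Matrix ι ι ℝ) (hAA : A * A = K) (hs : ∀ a b, A a b = A b a)
    (hdet : A.det ≠ 0) (a b : ι) :
    (∫ x : ι → ℝ, gaussDensity 0 K x * (x a * x b)) = K a b := by
  rw [transfer_integral A hdet]
  have h1 : (∫ y : ι → ℝ, gaussDensity 0 K (A *ᵥ y) * ((A *ᵥ y) a * (A *ᵥ y) b))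
      = ∑ j, ∑ k, (|A.det|⁻¹ * (A a j * A b k)) * (if j = k then (1:ℝ) else 0) := by
    rw [integral_congr_ae (g := fun y : ι → ℝ =>
      ∑ j, ∑ k, (|A.det|⁻¹ * (A a j * A b k)) * ((y j * y k) * ∏ i, gauss1 0 1 (y i)))
      (by filter_upwards with y; exact comp_moment_eq A hAA hs hdet a b y)]
    rw [integral_finset_sum _ (fun j _ => integrable_finset_sum _
      (fun k _ => (integrable_jk_gauss j k).const_mul _))]
    refine Finset.sum_congr rfl fun j _ => ?_
    rw [integral_finset_sum _ (fun k _ => (integrable_jk_gauss j k).const_mul _)]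
    refine Finset.sum_congr rfl fun k _ => ?_
    rw [integral_const_mul, integral_jk_gauss]
  rw [h1]
  have h2 : ∀ j : ι, (∑ k, (|A.det|⁻¹ * (A a j * A b k)) * (if j = k then (1:ℝ) else 0))
      = |A.det|⁻¹ * (A a j * A b j) := by
    intro j
    rw [Finset.sum_eq_single j]
    · rw [if_pos rfl, mul_one]
    · intro k _ hk; rw [if_neg (fun h => hk h.symm), mul_zero]
    · intro h; exact absurd (Finset.mem_univ j) h
  simp_rw [h2]
  rw [← Finset.mul_sum, ← mul_assoc, mul_inv_cancel₀ (abs_ne_zero.2 hdet), one_mul]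
  have : (∑ j, A a j * A b j) = (A * A) a b := by
    rw [Matrix.mul_apply]
    exact Finset.sum_congr rfl fun j _ => by rw [hs j b]
  rw [this, hAA]

end withA

section primed
variable {K : Matrix ι ι ℝ}

lemma integrable_gaussDensity' (hK : K.PosDef) : Integrable (gaussDensity 0 K) := by
  obtain ⟨A, hAA, hsy, hdet⟩ := exists_sqrtM hK
  exact integrable_gaussDensity A hAA hsy hdet

lemma integral_gaussDensity' (hK : K.PosDef) : (∫ x : ι → ℝ, gaussDensity 0 K x) = 1 := by
  obtain ⟨A, hAA, hsy, hdet⟩ := exists_sqrtM hK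
  exact integral_gaussDensity A hAA hsy hdet

lemma integrable_moment_ab' (hK : K.PosDef) (a b : ι) :
    Integrable (fun x : ι → ℝ => gaussDensity 0 K x * (x a * x b)) := by
  obtain ⟨A, hAA, hsy, hdet⟩ := exists_sqrtM hK
  exact integrable_moment_ab A hAA hsy hdet a b

lemma integral_moment_ab' (hK : K.PosDef) (a b : ι) :
    (∫ x : ι → ℝ, gaussDensity 0 K x * (x a * x b)) = K a b := by
  obtain ⟨A, hAA, hsy, hdet⟩ := exists_sqrtM hK
  exact integral_moment_ab A hAA hsy hdet a b

end primed
section KL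
variable {K : Matrix ι ι ℝ}

-- dot-subtype symmetry of (subm K G)⁻¹
lemma subm_inv_symm (hK : K.PosDef) (G : Finset ι) (a b : G) :
    (subm K G)⁻¹ a b = (subm K G)⁻¹ b a := by
  have hsub : (subm K G)ᵀ = subm K G := by
    ext j k; exact symm_apply hK k.1 j.1
  have h := Matrix.transpose_nonsing_inv (subm K G)
  rw [hsub] at h
  have := congrFun (congrFun h b) a
  rw [Matrix.transpose_apply] at this
  exact this

lemma condMean_eq (hK : K.PosDef) (G : Finset ι) (i : ι) (x : ι → ℝ) :
    condMean 0 K i G x = ∑ a, extG G (cvec K G i) a * x a := by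
  unfold condMean
  simp only [Pi.zero_apply, zero_add, sub_zero]
  have h1 : (fun j : G => K i j.1) = fun j : G => K j.1 i := by
    funext j; exact symm_apply hK i j.1
  rw [h1]
  have h2 : dotProduct (fun j : G => K j.1 i) ((subm K G)⁻¹ *ᵥ fun j : G => x j.1)
      = dotProduct (fun j : G => x j.1) ((subm K G)⁻¹ *ᵥ fun j : G => K j.1 i) := by
    have hM : ∀ a b : G, (subm K G)⁻¹ a b = (subm K G)⁻¹ b a := subm_inv_symm hK G
    have := dot_expand ((subm K G)⁻¹) (fun j : G => K j.1 i) (fun j : G => x j.1)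
    rw [dot_expand ((subm K G)⁻¹) (fun j : G => K j.1 i) (fun j : G => x j.1),
      dot_expand ((subm K G)⁻¹) (fun j : G => x j.1) (fun j : G => K j.1 i), Finset.sum_comm]
    refine Finset.sum_congr rfl fun b _ => Finset.sum_congr rfl fun a _ => by
      rw [hM a b]; ring
  rw [h2]
  rw [show (∑ a, extG G (cvec K G i) a * x a) = ∑ a, x a * extG G (cvec K G i) a from
    Finset.sum_congr rfl fun a _ => by ring]
  rw [sum_mul_extG (cvec K G i) x]
  rfl

/-- the linear functional `x i - condMean` -/
lemma sub_condMean_eq (hK : K.PosDef) (G : Finset ι) (i : ι) (x : ι → ℝ) :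
    x i - condMean 0 K i G x = ∑ a, uvec K G i (cvec K G i) a * x a := by
  rw [condMean_eq hK G i x]
  unfold uvec
  rw [show (∑ a, ((if a = i then (1:ℝ) else 0) - extG G (cvec K G i) a) * x a)
      = (∑ a, (if a = i then (1:ℝ) else 0) * x a) - ∑ a, extG G (cvec K G i) a * x a from by
    rw [← Finset.sum_sub_distrib]
    exact Finset.sum_congr rfl fun a _ => by ring]
  rw [sum_delta x i]

/-- integral and integrability of `f ⋅ (∑ u a x a)²` -/
lemma integrable_f_linsq (hK : K.PosDef) (u : ι → ℝ) :
    Integrable (fun x : ι → ℝ => gaussDensity 0 K x * (∑ a, u a * x a) ^ 2) := by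
  have key : ∀ x : ι → ℝ, gaussDensity 0 K x * (∑ a, u a * x a) ^ 2
      = ∑ a, ∑ b, (u a * u b) * (gaussDensity 0 K x * (x a * x b)) := by
    intro x
    rw [sq, Finset.sum_mul_sum, Finset.mul_sum]
    refine Finset.sum_congr rfl fun a _ => ?_
    rw [Finset.mul_sum]
    refine Finset.sum_congr rfl fun b _ => by ring
  simp_rw [key]
  apply integrable_finset_sum
  intro a _
  apply integrable_finset_sum
  intro b _
  exact (integrable_moment_ab' hK a b).const_mul _

lemma integral_f_linsq (hK : K.PosDef) (u : ι → ℝ) :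
    (∫ x : ι → ℝ, gaussDensity 0 K x * (∑ a, u a * x a) ^ 2)
      = dotProduct u (K *ᵥ u) := by
  have key : ∀ x : ι → ℝ, gaussDensity 0 K x * (∑ a, u a * x a) ^ 2
      = ∑ a, ∑ b, (u a * u b) * (gaussDensity 0 K x * (x a * x b)) := by
    intro x
    rw [sq, Finset.sum_mul_sum, Finset.mul_sum]
    refine Finset.sum_congr rfl fun a _ => ?_
    rw [Finset.mul_sum]
    refine Finset.sum_congr rfl fun b _ => by ring
  simp_rw [key]
  rw [integral_finset_sum _ (fun a _ => integrable_finset_sum _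
    (fun b _ => (integrable_moment_ab' hK a b).const_mul _))]
  rw [dot_expand]
  refine Finset.sum_congr rfl fun a _ => ?_
  rw [integral_finset_sum _ (fun b _ => (integrable_moment_ab' hK a b).const_mul _)]
  refine Finset.sum_congr rfl fun b _ => ?_
  rw [integral_const_mul, integral_moment_ab' hK a b]
  ring

/-- integral and integrability of `f ⋅ q` with `q x = ⟨x, K⁻¹ x⟩` -/
lemma integrable_f_quad (hK : K.PosDef) :
    Integrable (fun x : ι → ℝ => gaussDensity 0 K x * dotProduct x (K⁻¹ *ᵥ x)) := by
  have key : ∀ x : ι → ℝ, gaussDensity 0 K x * dotProduct x (K⁻¹ *ᵥ x)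
      = ∑ a, ∑ b, K⁻¹ a b * (gaussDensity 0 K x * (x a * x b)) := by
    intro x
    rw [dot_expand, Finset.mul_sum]
    refine Finset.sum_congr rfl fun a _ => ?_
    rw [Finset.mul_sum]
    refine Finset.sum_congr rfl fun b _ => by ring
  simp_rw [key]
  apply integrable_finset_sum
  intro a _
  apply integrable_finset_sum
  intro b _
  exact (integrable_moment_ab' hK a b).const_mul _

lemma integral_f_quad (hK : K.PosDef) :
    (∫ x : ι → ℝ, gaussDensity 0 K x * dotProduct x (K⁻¹ *ᵥ x))
      = (Fintype.card ι : ℝ) := by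
  have key : ∀ x : ι → ℝ, gaussDensity 0 K x * dotProduct x (K⁻¹ *ᵥ x)
      = ∑ a, ∑ b, K⁻¹ a b * (gaussDensity 0 K x * (x a * x b)) := by
    intro x
    rw [dot_expand, Finset.mul_sum]
    refine Finset.sum_congr rfl fun a _ => ?_
    rw [Finset.mul_sum]
    refine Finset.sum_congr rfl fun b _ => by ring
  simp_rw [key]
  rw [integral_finset_sum _ (fun a _ => integrable_finset_sum _
    (fun b _ => (integrable_moment_ab' hK a b).const_mul (K⁻¹ a b)))]
  have hstep : ∀ a : ι, (∫ x : ι → ℝ, ∑ b, K⁻¹ a b * (gaussDensity 0 K x * (x a * x b)))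
      = ∑ b, K⁻¹ a b * K a b := by
    intro a
    rw [integral_finset_sum _ (fun b _ => (integrable_moment_ab' hK a b).const_mul (K⁻¹ a b))]
    refine Finset.sum_congr rfl fun b _ => by
      rw [integral_const_mul, integral_moment_ab' hK a b]
  simp_rw [hstep]
  have htr : ∀ a : ι, (∑ b, K⁻¹ a b * K a b) = (1 : Matrix ι ι ℝ) a a := by
    intro a
    rw [← Matrix.nonsing_inv_mul K (isUnit_iff_ne_zero.2 hK.det_pos.ne'), Matrix.mul_apply]
    exact Finset.sum_congr rfl fun b _ => by rw [symm_apply hK a b]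
  simp_rw [htr, Matrix.one_apply_eq]
  simp

/-- the KL divergence formula for a Vecchia approximation -/
theorem KL_formula (hK : K.PosDef) (g : ι → Finset ι) (hg : ∀ i, i ∉ g i) :
    KLdiv (gaussDensity 0 K) (vecchia 0 K g)
      = (∑ i, Real.log (Real.sqrt (2 * π * condVar K i (g i))))
        - Real.log (Real.sqrt ((2 * π) ^ (Fintype.card ι) * K.det)) := by
  set f := gaussDensity 0 K with hf
  set C : ℝ := (Real.sqrt ((2 * π) ^ (Fintype.card ι) * K.det))⁻¹ with hC
  have hCpos : 0 < C := by
    rw [hC]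
    have : (0:ℝ) < (2 * π) ^ (Fintype.card ι) * K.det := by
      have := hK.det_pos; positivity
    positivity
  set v : ι → ℝ := fun i => condVar K i (g i) with hv
  have hvpos : ∀ i, 0 < v i := fun i => condVar_pos hK (hg i)
  set D : ι → ℝ := fun i => (Real.sqrt (2 * π * v i))⁻¹ with hD
  have hDpos : ∀ i, 0 < D i := by
    intro i
    have := hvpos i
    rw [hD]
    have : (0:ℝ) < 2 * π * v i := by have := hvpos i; positivity
    positivity
  set u : ι → ι → ℝ := fun i => uvec K (g i) i (cvec K (g i) i) with hu
  set s : ι → (ι → ℝ) → ℝ := fun i x => ∑ a, u i a * x a with hs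
  set q : (ι → ℝ) → ℝ := fun x => dotProduct x (K⁻¹ *ᵥ x) with hq
  -- positivity of densities
  have hfpos : ∀ x, 0 < f x := by
    intro x
    rw [hf]
    unfold gaussDensity
    exact mul_pos hCpos (Real.exp_pos _)
  have hvecpos : ∀ x, 0 < vecchia 0 K g x := by
    intro x
    unfold vecchia
    exact Finset.prod_pos fun i _ => gauss1_pos (hvpos i) _
  -- pointwise log identities
  have hlogf : ∀ x, Real.log (f x) = Real.log C - q x / 2 := by
    intro x
    rw [hf]
    unfold gaussDensity
    rw [sub_zero, Real.log_mul hCpos.ne' (Real.exp_pos _).ne', Real.log_exp]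
    rw [hq]
    ring
  have hcondDens : ∀ i x, condDens 0 K i (g i) x = D i * Real.exp (-( (s i x) ^ 2) / (2 * v i)) := by
    intro i x
    unfold condDens gauss1
    have hsm : x i - condMean 0 K i (g i) x = s i x := sub_condMean_eq hK (g i) i x
    rw [hsm]
  have hlogvec : ∀ x, Real.log (vecchia 0 K g x)
      = ∑ i, (Real.log (D i) - (s i x) ^ 2 / (2 * v i)) := by
    intro x
    unfold vecchia
    have hne : ∀ i ∈ Finset.univ, condDens 0 K i (g i) x ≠ 0 := by
      intro i _
      rw [hcondDens i x]
      exact (mul_pos (hDpos i) (Real.exp_pos _)).ne'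
    rw [Real.log_prod hne]
    refine Finset.sum_congr rfl fun i _ => ?_
    rw [hcondDens i x, Real.log_mul (hDpos i).ne' (Real.exp_pos _).ne', Real.log_exp]
    ring
  -- the integrand as an integrable linear combination
  have hint : (fun x : ι → ℝ => f x * Real.log (f x / vecchia 0 K g x))
      = fun x => (Real.log C) * f x + (-(2:ℝ)⁻¹) * (f x * q x)
          + ∑ i, ((-(Real.log (D i))) * f x + (2 * v i)⁻¹ * (f x * (s i x) ^ 2)) := by
    funext x
    rw [Real.log_div (hfpos x).ne' (hvecpos x).ne', hlogf x, hlogvec x]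
    rw [mul_sub, Finset.mul_sum]
    rw [show (∑ i, f x * (Real.log (D i) - s i x ^ 2 / (2 * v i)))
        = ∑ i, (Real.log (D i) * f x - (2 * v i)⁻¹ * (f x * (s i x) ^ 2)) from
      Finset.sum_congr rfl fun i _ => by ring]
    rw [show (∑ i, ((-(Real.log (D i))) * f x + (2 * v i)⁻¹ * (f x * (s i x) ^ 2)))
        = -∑ i, (Real.log (D i) * f x - (2 * v i)⁻¹ * (f x * (s i x) ^ 2)) from by
      rw [← Finset.sum_neg_distrib]
      exact Finset.sum_congr rfl fun i _ => by ring]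
    ring
  -- integrate
  have hI1 : Integrable (fun x : ι → ℝ => (Real.log C) * f x) :=
    (integrable_gaussDensity' hK).const_mul _
  have hI2 : Integrable (fun x : ι → ℝ => (-(2:ℝ)⁻¹) * (f x * q x)) :=
    (integrable_f_quad hK).const_mul _
  have hTi : ∀ i : ι, Integrable (fun x : ι → ℝ =>
      (-(Real.log (D i))) * f x + (2 * v i)⁻¹ * (f x * (s i x) ^ 2)) := by
    intro i
    exact ((integrable_gaussDensity' hK).const_mul _).add
      ((integrable_f_linsq hK (u i)).const_mul _)
  have hI3 : Integrable (fun x : ι → ℝ =>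
      ∑ i, ((-(Real.log (D i))) * f x + (2 * v i)⁻¹ * (f x * (s i x) ^ 2))) :=
    integrable_finset_sum _ (fun i _ => hTi i)
  have hI12 : Integrable (fun x : ι → ℝ =>
      (Real.log C) * f x + (-(2:ℝ)⁻¹) * (f x * q x)) := hI1.add hI2
  rw [KLdiv, hint]
  rw [integral_add hI12 hI3, integral_add hI1 hI2]
  rw [integral_const_mul, integral_const_mul, integral_gaussDensity' hK, integral_f_quad hK]
  rw [integral_finset_sum _ (fun i _ => hTi i)]
  have hterm : ∀ i : ι, (∫ x : ι → ℝ,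
      ((-(Real.log (D i))) * f x + (2 * v i)⁻¹ * (f x * (s i x) ^ 2)))
      = -(Real.log (D i)) + 2⁻¹ := by
    intro i
    rw [integral_add ((integrable_gaussDensity' hK).const_mul _)
      ((integrable_f_linsq hK (u i)).const_mul _)]
    rw [integral_const_mul, integral_const_mul, integral_gaussDensity' hK,
      integral_f_linsq hK (u i)]
    have : dotProduct (u i) (K *ᵥ u i) = v i := condVar_eq_quad hK (hg i)
    rw [this]
    have hvne : v i ≠ 0 := (hvpos i).ne'
    field_simp
  simp_rw [hterm]
  rw [Finset.sum_add_distrib, Finset.sum_const, Finset.card_univ]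
  have hlogD : ∀ i, -(Real.log (D i)) = Real.log (Real.sqrt (2 * π * v i)) := by
    intro i
    rw [hD, Real.log_inv]
    ring
  simp_rw [hlogD]
  have hlogC : Real.log C = - Real.log (Real.sqrt ((2 * π) ^ (Fintype.card ι) * K.det)) := by
    rw [hC, Real.log_inv]
  rw [hlogC]
  rw [show ∑ i, Real.log (Real.sqrt (2 * π * condVar K i (g i)))
      = ∑ i, Real.log (Real.sqrt (2 * π * v i)) from rfl]
  push_cast
  ring

end KL

lemma nested {N d : ℕ} (s : Fin N → EuclideanSpace ℝ (Fin d))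
    (g : ℕ → Fin N → Finset (Fin N))
    (hsub : ∀ m, 1 ≤ m → ∀ i, g m i ⊆ Finset.Iio i)
    (hcard : ∀ m, 1 ≤ m → ∀ i, (g m i).card = min m (i : ℕ))
    (hnear : ∀ m, 1 ≤ m → ∀ i, ∀ j ∈ g m i, ∀ k ∈ Finset.Iio i, k ∉ g m i →
      dist (s i) (s j) < dist (s i) (s k)) :
    ∀ m, 1 ≤ m → ∀ i, g m i ⊆ g (m + 1) i := by
  intro m hm i j hj
  by_contra hjn
  have hm1 : 1 ≤ m + 1 := Nat.le_succ_of_le hm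
  have hji : j ∈ Finset.Iio i := hsub m hm i hj
  have hiv : 1 ≤ (i : ℕ) := by
    have : j < i := Finset.mem_Iio.1 hji
    have : (j : ℕ) < (i : ℕ) := this
    omega
  have hminpos : 1 ≤ min m (i : ℕ) := le_min hm hiv
  -- there is k ∈ g (m+1) i with k ∉ g m i
  have hex : ∃ k ∈ g (m + 1) i, k ∉ g m i := by
    by_contra hno
    push_neg at hno
    have hss : g (m + 1) i ⊆ (g m i).erase j := by
      intro k hk
      exact Finset.mem_erase.2 ⟨fun h => hjn (h ▸ hk), hno k hk⟩
    have hcard1 : (g (m + 1) i).card ≤ (g m i).card - 1 := by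
      have := Finset.card_le_card hss
      rwa [Finset.card_erase_of_mem hj] at this
    rw [hcard m hm i, hcard (m + 1) hm1 i] at hcard1
    have : min m (i : ℕ) ≤ min (m + 1) (i : ℕ) := by omega
    omega
  obtain ⟨k, hk, hkn⟩ := hex
  have hki : k ∈ Finset.Iio i := hsub (m + 1) hm1 i hk
  have h1 := hnear m hm i j hj k hki hkn
  have h2 := hnear (m + 1) hm1 i k hk j hji hjn
  linarith


/-- **Proposition 2, part 2: nearest-neighbor conditioning sets are nested in `m`, and the KL
divergence of the Vecchia approximation is nonincreasing in the number of neighbors `m`.**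
Here `g m i` is the (unique, by the distinct-distance assumption) set of the `min(m, i−1)`
previously ordered points nearest to `s i`. -/
theorem kl_antitone_in_nearest_neighbors
    {N d : ℕ} (s : Fin N → EuclideanSpace ℝ (Fin d))
    (hinj : Function.Injective s)
    (hdist : ∀ i j k : Fin N, j < i → k < i → j ≠ k →
      dist (s i) (s j) ≠ dist (s i) (s k))
    (g : ℕ → Fin N → Finset (Fin N))
    (hsub : ∀ m, 1 ≤ m → ∀ i, g m i ⊆ Finset.Iio i)
    (hcard : ∀ m, 1 ≤ m → ∀ i, (g m i).card = min m (i : ℕ))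
    (hnear : ∀ m, 1 ≤ m → ∀ i, ∀ j ∈ g m i, ∀ k ∈ Finset.Iio i, k ∉ g m i →
      dist (s i) (s j) < dist (s i) (s k)) :
    (∀ m, 1 ≤ m → ∀ i, g m i ⊆ g (m + 1) i) ∧
      ∀ (K : Matrix (Fin N) (Fin N) ℝ), K.PosDef → ∀ m, 1 ≤ m →
        KLdiv (gaussDensity 0 K) (vecchia 0 K (g (m + 1))) ≤
          KLdiv (gaussDensity 0 K) (vecchia 0 K (g m)) := by
  constructor
  · exact nested s g hsub hcard hnear
  · intro K hK m hm
    have hm1 : 1 ≤ m + 1 := Nat.le_succ_of_le hm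
    have hg1 : ∀ i, i ∉ g m i := fun i h =>
      absurd (Finset.mem_Iio.1 (hsub m hm i h)) (lt_irrefl i)
    have hg2 : ∀ i, i ∉ g (m + 1) i := fun i h =>
      absurd (Finset.mem_Iio.1 (hsub (m + 1) hm1 i h)) (lt_irrefl i)
    rw [KL_formula hK (g (m + 1)) hg2, KL_formula hK (g m) hg1]
    apply sub_le_sub_right
    apply Finset.sum_le_sum
    intro i _
    have hvle : condVar K i (g (m + 1) i) ≤ condVar K i (g m i) :=
      condVar_anti hK (nested s g hsub hcard hnear m hm i) (hg2 i)
    have hvpos : 0 < condVar K i (g (m + 1) i) := condVar_pos hK (hg2 i)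
    apply Real.log_le_log (Real.sqrt_pos.2 (by positivity))
    apply Real.sqrt_le_sqrt
    nlinarith [Real.pi_pos]

end
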